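/- arXiv:1807.02973 — 2 statements merged into one kernel-verified Lean document; each statement's English description precedes it below -/
import Mathlib

section
/- Let (N₁, (W, S), N₂) be a net-abstraction, let p, q be chain-agglomerable places of N₂, and let N₃ be the chain agglomeration of p and q in N₂ with new place a, where a ∉ W ∪ P₁ ∪ P₂. Let W' = W ∪ {p, q, a} and let S' be the set of valuations e : W' → ℕ such that the restriction of e to W lies in S and e(a) = e(p) + e(q). Then (N₁, (W', S'), N₃) is a net-abstraction. -/
/-! Marked Petri nets with places drawn from a type `X` and transitions drawn from a type `T`.
Markings are total functions `X → ℕ`; a marking (valuation) "on a set of places `V`" is a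
function that vanishes outside of `V`. -/

/-- The restriction of a valuation to a set `V` (zero outside `V`). -/
noncomputable def restrictTo {X : Type} (V : Set X) (f : X → ℕ) : X → ℕ :=
  V.indicator f

/-- Valuations on `V`: functions vanishing outside `V`. -/
def ValuationOn {X : Type} (V : Set X) : Set (X → ℕ) :=
  {f | ∀ x, x ∉ V → f x = 0}

/-- Lifting of a set `E` of valuations on `V` to a superset `U` of `V`:
the valuations on `U` whose restriction to `V` lies in `E`. -/
def liftTo {X : Type} (E : Set (X → ℕ)) (V U : Set X) : Set (X → ℕ) :=
  {f | f ∈ ValuationOn U ∧ restrictTo V f ∈ E}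

/-- Projection of a set `E` of valuations to a subset `U`: the restrictions to `U`
of the members of `E`. -/
def projTo {X : Type} (E : Set (X → ℕ)) (U : Set X) : Set (X → ℕ) :=
  (restrictTo U) '' E

/-- A marked Petri net `N = (P, T, Pre, Post, m₀)`. The set of places is `N.places ⊆ X`
and the set of transitions is `N.trans ⊆ T`. -/
structure PNet (X T : Type) where
  places : Set X
  trans : Set T
  Pre : T → X → ℕ
  Post : T → X → ℕ
  m0 : X → ℕ

namespace PNet

variable {X T : Type}

/-- Well-formedness: the sets of places and transitions are finite, and the initial
marking as well as the pre/post-conditions of the transitions vanish outside the places. -/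
def WF (N : PNet X T) : Prop :=
  N.places.Finite ∧ N.trans.Finite ∧
    (∀ x, x ∉ N.places → N.m0 x = 0) ∧
    (∀ t ∈ N.trans, ∀ x, x ∉ N.places → N.Pre t x = 0 ∧ N.Post t x = 0)

/-- A transition `t` is enabled at marking `m` if `m ≥ Pre(t)` pointwise. -/
def Enabled (N : PNet X T) (t : T) (m : X → ℕ) : Prop :=
  t ∈ N.trans ∧ ∀ x, N.Pre t x ≤ m x

/-- The marking obtained by firing `t` at `m` : `m - Pre(t) + Post(t)`. -/
def fire (N : PNet X T) (t : T) (m : X → ℕ) : X → ℕ :=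
  fun x => m x - N.Pre t x + N.Post t x

/-- One-step firing relation between markings. -/
def Step (N : PNet X T) (m m' : X → ℕ) : Prop :=
  ∃ t, N.Enabled t m ∧ m' = N.fire t m

/-- The reachability set (state space) `R(N)`: all markings reachable from `m₀`. -/
def R (N : PNet X T) : Set (X → ℕ) :=
  {m | Relation.ReflTransGen N.Step N.m0 m}

/-- `FireSeq N m σ m'` : the firing sequence `σ` can be fired from `m`, yielding `m'`. -/
def FireSeq (N : PNet X T) : (X → ℕ) → List T → (X → ℕ) → Prop
  | m, [], m' => m' = m
  | m, t :: σ, m' => N.Enabled t m ∧ FireSeq N (N.fire t m) σ m'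

/-- The sequence `σ` is firable from the marking `m`. -/
def Firable (N : PNet X T) (m : X → ℕ) (σ : List T) : Prop :=
  ∃ m', N.FireSeq m σ m'

/-- Displacement `Δ(t) = Post(t) - Pre(t) : P → ℤ` of a transition. -/
def delta (N : PNet X T) (t : T) : X → ℤ :=
  fun x => (N.Post t x : ℤ) - (N.Pre t x : ℤ)

/-- Displacement `Δ(σ)` of a firing sequence. -/
def deltaSeq (N : PNet X T) (σ : List T) : X → ℤ :=
  fun x => (σ.map (fun t => N.delta t x)).sum

/-- `t` is a redundant transition witnessed by the sequence `σ`: `σ` avoids `t`,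
has the same displacement as `t`, and is firable from the marking `Pre(t)`
(i.e. `H(t) ≥ H(σ)`). -/
def RedundantTransition (N : PNet X T) (t : T) (σ : List T) : Prop :=
  t ∈ N.trans ∧ (∀ u ∈ σ, u ∈ N.trans ∧ u ≠ t) ∧
    N.deltaSeq σ = N.delta t ∧ N.Firable (N.Pre t) σ

/-- The net obtained by removing transition `t`. -/
def removeTrans (N : PNet X T) (t : T) : PNet X T :=
  { N with trans := N.trans \ {t} }

/-- `p` is a redundant place, witnessed by the set of places `I ⊆ P ∖ {p}`, the
valuation `v` (positive on `I ∪ {p}`) and the constant `b`. -/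
def RedundantPlace (N : PNet X T) (p : X) (I : Finset X) (v : X → ℕ) (b : ℕ) : Prop :=
  p ∈ N.places ∧ ↑I ⊆ N.places \ {p} ∧ v p ≠ 0 ∧ (∀ q ∈ I, v q ≠ 0) ∧
    ((b : ℤ) = (v p : ℤ) * (N.m0 p : ℤ) - ∑ q ∈ I, (v q : ℤ) * (N.m0 q : ℤ)) ∧
    (∀ t ∈ N.trans,
      (v p : ℤ) * (N.Pre t p : ℤ) - ∑ q ∈ I, (v q : ℤ) * (N.Pre t q : ℤ) ≤ (b : ℤ)) ∧
    (∀ t ∈ N.trans,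
      (v p : ℤ) * ((N.Post t p : ℤ) - (N.Pre t p : ℤ))
        = ∑ q ∈ I, (v q : ℤ) * ((N.Post t q : ℤ) - (N.Pre t q : ℤ)))

/-- The net obtained by removing place `p` (restriction to `P ∖ {p}`). -/
noncomputable def removePlace (N : PNet X T) (p : X) : PNet X T where
  places := N.places \ {p}
  trans := N.trans
  Pre := fun t => restrictTo (N.places \ {p}) (N.Pre t)
  Post := fun t => restrictTo (N.places \ {p}) (N.Post t)
  m0 := restrictTo (N.places \ {p}) N.m0

/-- Place `a` is the sum of places `p` and `q`, written `a = p ⊞ q`. -/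
def IsSumPlace (N : PNet X T) (a p q : X) : Prop :=
  N.m0 a = N.m0 p + N.m0 q ∧
    ∀ t ∈ N.trans, N.Pre t a = N.Pre t p + N.Pre t q ∧ N.Post t a = N.Post t p + N.Post t q

/-- Places `p` and `q` are chain-agglomerable, witnessed by the transition `t`. -/
def ChainAgglomerable (N : PNet X T) (p q : X) (t : T) : Prop :=
  p ∈ N.places ∧ q ∈ N.places ∧ p ≠ q ∧ t ∈ N.trans ∧
    N.Pre t p = 1 ∧ (∀ r, r ≠ p → N.Pre t r = 0) ∧
    N.Post t q = 1 ∧ (∀ r, r ≠ q → N.Post t r = 0) ∧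
    (∀ t' ∈ N.trans, t' ≠ t → N.Post t' q = 0) ∧
    N.m0 q = 0

/-- Agglomeration of the set of places `A` as the fresh place `a`: the places become
`(P ∖ A) ∪ {a}`, the place `a` behaves as the sum of the places of `A`, and everything
else is unchanged. -/
noncomputable def agglom [DecidableEq X] (N : PNet X T) (A : Finset X) (a : X) : PNet X T where
  places := (N.places \ ↑A) ∪ {a}
  trans := N.trans
  Pre := fun u => Function.update (restrictTo (N.places \ ↑A) (N.Pre u)) a (∑ x ∈ A, N.Pre u x)
  Post := fun u => Function.update (restrictTo (N.places \ ↑A) (N.Post u)) a (∑ x ∈ A, N.Post u x)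
  m0 := Function.update (restrictTo (N.places \ ↑A) N.m0) a (∑ x ∈ A, N.m0 x)

/-- `(p, t)` is a source-sink pair. -/
def SourceSink (N : PNet X T) (p : X) (t : T) : Prop :=
  p ∈ N.places ∧ t ∈ N.trans ∧
    (∀ u ∈ N.trans, N.Post u p = 0) ∧
    (∀ u ∈ N.trans, u ≠ t → N.Pre u p = 0) ∧
    N.Pre t p = 1 ∧ (∀ r, r ≠ p → N.Pre t r = 0) ∧
    (∀ r, N.Post t r = 0)

/-- The net obtained by removing the source-sink pair `(p, t)`. -/
noncomputable def removeSourceSink (N : PNet X T) (p : X) (t : T) : PNet X T where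
  places := N.places \ {p}
  trans := N.trans \ {t}
  Pre := fun u => restrictTo (N.places \ {p}) (N.Pre u)
  Post := fun u => restrictTo (N.places \ {p}) (N.Post u)
  m0 := restrictTo (N.places \ {p}) N.m0

end PNet

/-- `(N₁, (W, S), N₂)` is a net-abstraction:
`R(N₁) = ((R(N₂) ↑ V) ∩ (S ↑ V)) ↓ P₁` where `V = W ∪ P₁ ∪ P₂`. -/
def NetAbstraction {X T₁ T₂ : Type} (N₁ : PNet X T₁) (W : Set X) (S : Set (X → ℕ))
    (N₂ : PNet X T₂) : Prop :=
  N₁.R = projTo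
    (liftTo N₂.R N₂.places (W ∪ N₁.places ∪ N₂.places) ∩
      liftTo S W (W ∪ N₁.places ∪ N₂.places))
    N₁.places

section Aux

set_option linter.unusedSectionVars false

variable {X T : Type} [DecidableEq X]

lemma restrictTo_apply_mem {V : Set X} {f : X → ℕ} {x : X} (h : x ∈ V) :
    restrictTo V f x = f x := Set.indicator_of_mem h f

lemma restrictTo_apply_notMem {V : Set X} {f : X → ℕ} {x : X} (h : x ∉ V) :
    restrictTo V f x = 0 := Set.indicator_of_notMem h f

lemma reach_vanish (N : PNet X T) (hwf : N.WF) {m : X → ℕ} (hm : m ∈ N.R) :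
    ∀ x ∉ N.places, m x = 0 := by
  replace hm : Relation.ReflTransGen N.Step N.m0 m := hm
  induction hm with
  | refl => exact hwf.2.2.1
  | tail _ hstep ih =>
    obtain ⟨u, hu, rfl⟩ := hstep
    intro x hx
    have h := hwf.2.2.2 u hu.1 x hx
    simp [PNet.fire, ih x hx, h.1, h.2]

/-- Combination map: merge places `p`,`q` into `a`. -/
noncomputable def comb (P : Set X) (p q a : X) (m : X → ℕ) : X → ℕ :=
  Function.update (restrictTo (P \ {p, q}) m) a (m p + m q)

lemma comb_apply_a {P : Set X} {p q a : X} {m : X → ℕ} :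
    comb P p q a m a = m p + m q := by simp [comb]

lemma comb_apply_ne {P : Set X} {p q a x : X} {m : X → ℕ} (hx : x ≠ a) :
    comb P p q a m x = restrictTo (P \ {p, q}) m x := by
  simp [comb, Function.update_of_ne hx]

section Agglom

variable (N : PNet X T) {p q : X} (hpq : p ≠ q) (a : X)

set_option linter.unusedSectionVars false

include hpq

lemma agglom_places : (N.agglom {p, q} a).places = (N.places \ {p, q}) ∪ {a} := by
  simp [PNet.agglom]

lemma agglom_trans : (N.agglom {p, q} a).trans = N.trans := rfl

lemma agglom_Pre (u : T) : (N.agglom {p, q} a).Pre u =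
    Function.update (restrictTo (N.places \ {p, q}) (N.Pre u)) a (N.Pre u p + N.Pre u q) := by
  simp [PNet.agglom, Finset.sum_pair hpq]

lemma agglom_Post (u : T) : (N.agglom {p, q} a).Post u =
    Function.update (restrictTo (N.places \ {p, q}) (N.Post u)) a (N.Post u p + N.Post u q) := by
  simp [PNet.agglom, Finset.sum_pair hpq]

lemma agglom_m0 : (N.agglom {p, q} a).m0 = comb N.places p q a N.m0 := by
  simp [PNet.agglom, comb, Finset.sum_pair hpq]

end Agglom

section Sim

variable {N : PNet X T} {p q : X} {t : T} (hca : N.ChainAgglomerable p q t)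
  {a : X} (ha : a ∉ N.places)

include hca

/-- Firing `t` several times moves tokens from `p` to `q`. -/
lemma shift_tokens : ∀ (k : ℕ) (m : X → ℕ), m ∈ N.R → k ≤ m p →
    ∃ m' ∈ N.R, m' p = m p - k ∧ m' q = m q + k ∧ ∀ x, x ≠ p → x ≠ q → m' x = m x := by
  obtain ⟨hp, hq, hpq, ht, hPre, hPre0, hPost, hPost0, hq0, hm0q⟩ := hca
  intro k
  induction k with
  | zero => exact fun m hm _ => ⟨m, hm, by omega, by omega, fun _ _ _ => rfl⟩
  | succ k ih =>
    intro m hm hk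
    have hen : N.Enabled t m := by
      refine ⟨ht, fun x => ?_⟩
      by_cases hx : x = p
      · subst hx; rw [hPre]; omega
      · rw [hPre0 x hx]; omega
    have hstep : N.fire t m ∈ N.R :=
      Relation.ReflTransGen.tail hm ⟨t, hen, rfl⟩
    have hfp : N.fire t m p = m p - 1 := by
      simp [PNet.fire, hPre, hPost0 p hpq]
    have hfq : N.fire t m q = m q + 1 := by
      simp [PNet.fire, hPre0 q (Ne.symm hpq), hPost]
    have hfx : ∀ x, x ≠ p → x ≠ q → N.fire t m x = m x := by
      intro x hxp hxq
      simp [PNet.fire, hPre0 x hxp, hPost0 x hxq]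
    obtain ⟨m', h1, h2, h3, h4⟩ := ih (N.fire t m) hstep (by omega)
    exact ⟨m', h1, by omega, by omega,
      fun x hxp hxq => (h4 x hxp hxq).trans (hfx x hxp hxq)⟩

/-- Forward simulation: the combination of a reachable marking of `N` is reachable
in the agglomerated net. -/
lemma comb_reach {m : X → ℕ} (hm : m ∈ N.R) :
    comb N.places p q a m ∈ (N.agglom {p, q} a).R := by
  obtain ⟨hp, hq, hpq, ht, hPre, hPre0, hPost, hPost0, hq0, hm0q⟩ := hca
  replace hm : Relation.ReflTransGen N.Step N.m0 m := hm
  induction hm with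
  | refl =>
    have h0 : (N.agglom {p, q} a).m0 = comb N.places p q a N.m0 := agglom_m0 N hpq a
    rw [← h0]
    exact Relation.ReflTransGen.refl
  | @tail b c _ hstep ih =>
    obtain ⟨u, hu, rfl⟩ := hstep
    refine Relation.ReflTransGen.tail ih ⟨u, ⟨hu.1, fun x => ?_⟩, ?_⟩
    · rw [agglom_Pre N hpq a]
      by_cases hx : x = a
      · subst hx
        rw [Function.update_self, comb_apply_a]
        exact Nat.add_le_add (hu.2 p) (hu.2 q)
      · rw [Function.update_of_ne hx, comb_apply_ne hx]
        by_cases hmem : x ∈ N.places \ {p, q}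
        · rw [restrictTo_apply_mem hmem, restrictTo_apply_mem hmem]; exact hu.2 x
        · rw [restrictTo_apply_notMem hmem, restrictTo_apply_notMem hmem]
    · funext x
      rw [PNet.fire, agglom_Pre N hpq a, agglom_Post N hpq a]
      by_cases hx : x = a
      · subst hx
        rw [comb_apply_a, Function.update_self, Function.update_self, comb_apply_a]
        have h1 := hu.2 p
        have h2 := hu.2 q
        simp only [PNet.fire]
        omega
      · rw [comb_apply_ne hx, comb_apply_ne hx, Function.update_of_ne hx,
          Function.update_of_ne hx]
        by_cases hmem : x ∈ N.places \ {p, q}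
        · rw [restrictTo_apply_mem hmem, restrictTo_apply_mem hmem,
            restrictTo_apply_mem hmem, restrictTo_apply_mem hmem]
          rfl
        · rw [restrictTo_apply_notMem hmem, restrictTo_apply_notMem hmem,
            restrictTo_apply_notMem hmem, restrictTo_apply_notMem hmem]

include ha in
/-- Backward simulation, strong form: any reachable marking of the agglomerated net
comes from a reachable marking of `N`, with any prescribed split of the tokens on `a`. -/
lemma reach_split (hwf : N.WF) {m₃ : X → ℕ} (hm₃ : m₃ ∈ (N.agglom {p, q} a).R) :
    ∀ j k, j + k = m₃ a →
      ∃ m₂ ∈ N.R, m₂ p = j ∧ m₂ q = k ∧ comb N.places p q a m₂ = m₃ := by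
  obtain ⟨hp, hq, hpq, ht, hPre, hPre0, hPost, hPost0, hq0, hm0q⟩ := hca
  have hca' : N.ChainAgglomerable p q t :=
    ⟨hp, hq, hpq, ht, hPre, hPre0, hPost, hPost0, hq0, hm0q⟩
  replace hm₃ : Relation.ReflTransGen (N.agglom {p, q} a).Step (N.agglom {p, q} a).m0 m₃ := hm₃
  induction hm₃ with
  | refl =>
    intro j k hjk
    rw [agglom_m0 N hpq a, comb_apply_a, hm0q] at hjk
    obtain ⟨m', h1, h2, h3, h4⟩ := shift_tokens hca' k N.m0
      Relation.ReflTransGen.refl (by omega)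
    refine ⟨m', h1, by omega, by omega, ?_⟩
    rw [agglom_m0 N hpq a]
    funext x
    by_cases hx : x = a
    · subst hx; rw [comb_apply_a, comb_apply_a]; omega
    · rw [comb_apply_ne hx, comb_apply_ne hx]
      by_cases hmem : x ∈ N.places \ {p, q}
      · rw [restrictTo_apply_mem hmem, restrictTo_apply_mem hmem]
        exact h4 x (fun h => hmem.2 (by simp [h])) (fun h => hmem.2 (by simp [h]))
      · rw [restrictTo_apply_notMem hmem, restrictTo_apply_notMem hmem]
  | @tail b c _ hstep ih =>
    obtain ⟨u, hu, rfl⟩ := hstep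
    by_cases hut : u = t
    · subst hut
      have hfix : (N.agglom {p, q} a).fire u b = b := by
        funext x
        rw [PNet.fire, agglom_Pre N hpq a, agglom_Post N hpq a]
        by_cases hx : x = a
        · rw [hx]
          rw [Function.update_self, Function.update_self]
          have hba := hu.2 a
          rw [agglom_Pre N hpq a, Function.update_self] at hba
          rw [hPre, hPre0 q (Ne.symm hpq)] at hba ⊢
          rw [hPost, hPost0 p hpq]
          omega
        · rw [Function.update_of_ne hx, Function.update_of_ne hx]
          by_cases hmem : x ∈ N.places \ {p, q}
          · rw [restrictTo_apply_mem hmem, restrictTo_apply_mem hmem,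
              hPre0 x (fun h => hmem.2 (by simp [h])), hPost0 x (fun h => hmem.2 (by simp [h]))]
            omega
          · rw [restrictTo_apply_notMem hmem, restrictTo_apply_notMem hmem]
            omega
      rw [hfix]
      exact ih
    · intro j' k' hjk'
      -- facts about enabledness in the agglomerated net
      have hba : N.Pre u p + N.Pre u q ≤ b a := by
        have := hu.2 a
        rwa [agglom_Pre N hpq a, Function.update_self] at this
      obtain ⟨m₂, hm₂, hm₂p, hm₂q, hcomb⟩ := ih (b a - N.Pre u q) (N.Pre u q) (by omega)
      have hbx : ∀ x, x ∈ N.places \ {p, q} → b x = m₂ x := by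
        intro x hmem
        rw [← hcomb, comb_apply_ne (by intro h; apply ha; rw [← h]; exact hmem.1),
          restrictTo_apply_mem hmem]
      have hbx0 : ∀ x, x ≠ a → x ∉ N.places \ {p, q} → b x = 0 := by
        intro x hx hmem
        rw [← hcomb, comb_apply_ne hx, restrictTo_apply_notMem hmem]
      have hen : N.Enabled u m₂ := by
        refine ⟨hu.1, fun x => ?_⟩
        by_cases hxp : x = p
        · subst hxp; omega
        by_cases hxq : x = q
        · subst hxq; omega
        by_cases hmem : x ∈ N.places \ {p, q}
        · have := hu.2 x
          rw [agglom_Pre N hpq a, Function.update_of_ne (by intro h; apply ha; rw [← h]; exact hmem.1),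
            restrictTo_apply_mem hmem, hbx x hmem] at this
          exact this
        · have hxP : x ∉ N.places := fun h => hmem ⟨h, by simp [hxp, hxq]⟩
          rw [(hwf.2.2.2 u hu.1 x hxP).1]
          omega
      have hfire : N.fire u m₂ ∈ N.R := Relation.ReflTransGen.tail hm₂ ⟨u, hen, rfl⟩
      have hPostuq : N.Post u q = 0 := hq0 u hu.1 hut
      have hcfa : (N.agglom {p, q} a).fire u b a
          = b a - N.Pre u p - N.Pre u q + N.Post u p := by
        rw [PNet.fire, agglom_Pre N hpq a, agglom_Post N hpq a, Function.update_self,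
          Function.update_self, hPostuq]
        omega
      have hfp : N.fire u m₂ p = (N.agglom {p, q} a).fire u b a := by
        rw [PNet.fire, hcfa, hm₂p]
        have := hen.2 p
        omega
      have hfq : N.fire u m₂ q = 0 := by
        rw [PNet.fire, hm₂q, hPostuq]
        omega
      obtain ⟨m', h1, h2, h3, h4⟩ := shift_tokens hca' k' (N.fire u m₂) hfire
        (by rw [hfp]; omega)
      refine ⟨m', h1, by rw [h2, hfp]; omega, by rw [h3, hfq]; omega, ?_⟩
      funext x
      by_cases hx : x = a
      · rw [hx]
        rw [comb_apply_a]
        have : m' p + m' q = (N.agglom {p, q} a).fire u b a := by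
          rw [h2, h3, hfq, hfp]; omega
        exact this
      · rw [comb_apply_ne hx]
        by_cases hmem : x ∈ N.places \ {p, q}
        · have hxp : x ≠ p := fun h => hmem.2 (by simp [h])
          have hxq : x ≠ q := fun h => hmem.2 (by simp [h])
          rw [restrictTo_apply_mem hmem, h4 x hxp hxq]
          rw [PNet.fire, PNet.fire, agglom_Pre N hpq a, agglom_Post N hpq a,
            Function.update_of_ne hx, Function.update_of_ne hx,
            restrictTo_apply_mem hmem, restrictTo_apply_mem hmem, hbx x hmem]
        · rw [restrictTo_apply_notMem hmem]
          rw [PNet.fire, agglom_Pre N hpq a, agglom_Post N hpq a,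
            Function.update_of_ne hx, Function.update_of_ne hx,
            restrictTo_apply_notMem hmem, restrictTo_apply_notMem hmem,
            hbx0 x hx hmem]

end Sim

end Aux

/-- Net-abstractions are preserved by chain agglomeration in the
second net: if `p`, `q` are chain-agglomerable in `N₂` and `a` is fresh, then
`(N₁, (W ∪ {p, q, a}, S'), N₃)` is a net-abstraction, where `N₃` is the chain
agglomeration of `p` and `q` in `N₂` as `a` and `S'` extends `S` with the equation
`a = p + q`. -/
theorem netAbstraction_chainAgglomeration {X T₁ T₂ : Type} [Countable X] [DecidableEq X]
    (N₁ : PNet X T₁) (N₂ : PNet X T₂) (hwf₁ : N₁.WF) (hwf₂ : N₂.WF)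
    (W : Set X) (hW : W.Finite) (S : Set (X → ℕ)) (hS : S ⊆ ValuationOn W)
    (habs : NetAbstraction N₁ W S N₂)
    (p q : X) (t : T₂) (hca : N₂.ChainAgglomerable p q t)
    (a : X) (ha : a ∉ W ∪ N₁.places ∪ N₂.places) :
    NetAbstraction N₁ (W ∪ {p, q, a})
      {e | e ∈ ValuationOn (W ∪ {p, q, a}) ∧ restrictTo W e ∈ S ∧ e a = e p + e q}
      (N₂.agglom {p, q} a) := by
  have hca' := hca
  obtain ⟨hp, hq, hpq, ht, hPre, hPre0, hPost, hPost0, hq0, hm0q⟩ := hca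
  have haW : a ∉ W := fun h => ha (Or.inl (Or.inl h))
  have haP1 : a ∉ N₁.places := fun h => ha (Or.inl (Or.inr h))
  have haP2 : a ∉ N₂.places := fun h => ha (Or.inr h)
  have hpa : p ≠ a := by intro h; apply haP2; rw [← h]; exact hp
  have hqa : q ≠ a := by intro h; apply haP2; rw [← h]; exact hq
  have hP3 : (N₂.agglom {p, q} a).places = (N₂.places \ {p, q}) ∪ {a} :=
    agglom_places N₂ hpq a
  -- memberships in W' = W ∪ {p, q, a}
  have hpW' : p ∈ W ∪ ({p, q, a} : Set X) := Or.inr (by simp)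
  have hqW' : q ∈ W ∪ ({p, q, a} : Set X) := Or.inr (by simp)
  have haW' : a ∈ W ∪ ({p, q, a} : Set X) := Or.inr (by simp)
  have haP3 : a ∈ (N₂.agglom {p, q} a).places := by rw [hP3]; exact Or.inr rfl
  -- inclusion between the two "universes"
  have hVsub : ∀ x, x ∈ W ∪ N₁.places ∪ N₂.places →
      x ∈ (W ∪ {p, q, a}) ∪ N₁.places ∪ (N₂.agglom {p, q} a).places := by
    intro x hx
    rw [hP3]
    rcases hx with (hx | hx) | hx
    · exact Or.inl (Or.inl (Or.inl hx))
    · exact Or.inl (Or.inr hx)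
    · by_cases hxp : x = p
      · exact Or.inl (Or.inl (Or.inr (by simp [hxp])))
      by_cases hxq : x = q
      · exact Or.inl (Or.inl (Or.inr (by simp [hxq])))
      · exact Or.inr (Or.inl ⟨hx, by simp [hxp, hxq]⟩)
  have hVsub' : ∀ x, x ≠ a →
      x ∈ (W ∪ {p, q, a}) ∪ N₁.places ∪ (N₂.agglom {p, q} a).places →
      x ∈ W ∪ N₁.places ∪ N₂.places := by
    intro x hxa hx
    rw [hP3] at hx
    rcases hx with (hx | hx) | hx
    · rcases hx with hx | hx
      · exact Or.inl (Or.inl hx)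
      · simp only [Set.mem_insert_iff, Set.mem_singleton_iff] at hx
        rcases hx with rfl | rfl | rfl
        · exact Or.inr hp
        · exact Or.inr hq
        · exact absurd rfl hxa
    · exact Or.inl (Or.inr hx)
    · rcases hx with hx | hx
      · exact Or.inr hx.1
      · exact absurd hx hxa
  rw [NetAbstraction] at habs ⊢
  rw [habs]
  ext f
  simp only [projTo, Set.mem_image, Set.mem_inter_iff, liftTo, Set.mem_setOf_eq]
  constructor
  · rintro ⟨g, ⟨⟨hgV, hgR⟩, -, hgS⟩, rfl⟩
    set g' := Function.update g a (g p + g q) with hg'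
    have hg'ne : ∀ x, x ≠ a → g' x = g x := fun x hx => Function.update_of_ne hx _ _
    have hg'a : g' a = g p + g q := Function.update_self _ _ _
    have hval : g' ∈ ValuationOn ((W ∪ {p, q, a}) ∪ N₁.places ∪ (N₂.agglom {p, q} a).places) := by
      intro x hx
      have hxa : x ≠ a := by intro h; apply hx; rw [h]; exact Or.inr haP3
      rw [hg'ne x hxa]
      exact hgV x (fun h => hx (hVsub x h))
    refine ⟨g', ⟨⟨hval, ?_⟩, hval, ?_, ?_, ?_⟩, ?_⟩
    · -- restrictTo P₃ g' reachable in N₃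
      have hkey : restrictTo (N₂.agglom {p, q} a).places g'
          = comb N₂.places p q a (restrictTo N₂.places g) := by
        funext x
        by_cases hx : x = a
        · rw [hx, restrictTo_apply_mem haP3, hg'a, comb_apply_a,
            restrictTo_apply_mem hp, restrictTo_apply_mem hq]
        · rw [comb_apply_ne hx]
          by_cases hmem : x ∈ N₂.places \ {p, q}
          · rw [restrictTo_apply_mem (by rw [hP3]; exact Or.inl hmem),
              restrictTo_apply_mem hmem, restrictTo_apply_mem hmem.1, hg'ne x hx]
          · have hnot : x ∉ (N₂.agglom {p, q} a).places := by
              rw [hP3]; rintro (h | h)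
              exacts [hmem h, hx h]
            rw [restrictTo_apply_notMem hnot, restrictTo_apply_notMem hmem]
      rw [hkey]
      exact comb_reach hca' hgR
    · -- restriction to W' is a valuation on W'
      exact fun x hx => restrictTo_apply_notMem hx
    · -- restriction to W lands in S
      have : restrictTo W (restrictTo (W ∪ {p, q, a}) g') = restrictTo W g := by
        funext x
        by_cases hx : x ∈ W
        · rw [restrictTo_apply_mem hx, restrictTo_apply_mem (Set.mem_union_left _ hx),
            hg'ne x (by intro h; rw [h] at hx; exact haW hx), restrictTo_apply_mem hx]
        · rw [restrictTo_apply_notMem hx, restrictTo_apply_notMem hx]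
      rw [this]; exact hgS
    · -- the equation a = p + q
      rw [restrictTo_apply_mem haW', restrictTo_apply_mem hpW', restrictTo_apply_mem hqW',
        hg'a, hg'ne p hpa, hg'ne q hqa]
    · -- same projection to P₁
      funext x
      by_cases hx : x ∈ N₁.places
      · rw [restrictTo_apply_mem hx, restrictTo_apply_mem hx,
          hg'ne x (by intro h; rw [h] at hx; exact haP1 hx)]
      · rw [restrictTo_apply_notMem hx, restrictTo_apply_notMem hx]
  · rintro ⟨g', ⟨⟨hgV', hgR'⟩, -, -, hS0, heq⟩, rfl⟩
    rw [restrictTo_apply_mem haW', restrictTo_apply_mem hpW', restrictTo_apply_mem hqW'] at heq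
    obtain ⟨m₂, hm₂R, hm₂p, hm₂q, hcomb⟩ :=
      reach_split hca' haP2 hwf₂ hgR' (g' p) (g' q)
        (by rw [restrictTo_apply_mem haP3]; omega)
    set g := Function.update g' a 0 with hg
    have hgne : ∀ x, x ≠ a → g x = g' x := fun x hx => Function.update_of_ne hx _ _
    have hval : g ∈ ValuationOn (W ∪ N₁.places ∪ N₂.places) := by
      intro x hx
      by_cases hxa : x = a
      · rw [hxa]; exact Function.update_self _ _ _
      · rw [hgne x hxa]
        exact hgV' x (fun h => hx (hVsub' x hxa h))
    refine ⟨g, ⟨⟨hval, ?_⟩, hval, ?_⟩, ?_⟩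
    · -- restrictTo P₂ g = m₂ ∈ R(N₂)
      have hkey : restrictTo N₂.places g = m₂ := by
        funext x
        by_cases hxp : x = p
        · rw [hxp, restrictTo_apply_mem hp, hgne p hpa, hm₂p]
        by_cases hxq : x = q
        · rw [hxq, restrictTo_apply_mem hq, hgne q hqa, hm₂q]
        by_cases hmem : x ∈ N₂.places
        · have hxa : x ≠ a := by intro h; rw [h] at hmem; exact haP2 hmem
          have hmem' : x ∈ N₂.places \ {p, q} := ⟨hmem, by simp [hxp, hxq]⟩
          have := congrFun hcomb x
          rw [comb_apply_ne hxa, restrictTo_apply_mem hmem',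
            restrictTo_apply_mem (by rw [hP3]; exact Or.inl hmem')] at this
          rw [restrictTo_apply_mem hmem, hgne x hxa, ← this]
        · rw [restrictTo_apply_notMem hmem,
            reach_vanish N₂ hwf₂ hm₂R x hmem]
      rw [hkey]; exact hm₂R
    · -- restrictTo W g ∈ S
      have : restrictTo W g = restrictTo W (restrictTo (W ∪ {p, q, a}) g') := by
        funext x
        by_cases hx : x ∈ W
        · rw [restrictTo_apply_mem hx, restrictTo_apply_mem hx,
            restrictTo_apply_mem (Set.mem_union_left _ hx), hgne x (by intro h; rw [h] at hx; exact haW hx)]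
        · rw [restrictTo_apply_notMem hx, restrictTo_apply_notMem hx]
      rw [this]; exact hS0
    · funext x
      by_cases hx : x ∈ N₁.places
      · rw [restrictTo_apply_mem hx, restrictTo_apply_mem hx,
          hgne x (by intro h; rw [h] at hx; exact haP1 hx)]
      · rw [restrictTo_apply_notMem hx, restrictTo_apply_notMem hx]
end

section
/- Let (N₁, (W, S), N₂) be a net-abstraction, let (p, t) be a source-sink pair of N₂ with k = m₀₂(p), and let N₃ be obtained from N₂ by removing p and t. Let W' = W ∪ {p} and let S' be the set of valuations e : W' → ℕ such that the restriction of e to W lies in S and e(p) ≤ k. Then (N₁, (W', S'), N₃) is a net-abstraction. -/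
section AuxSS

variable {X T₂ : Type} [DecidableEq X]

lemma restrictTo_mem_valuationOn {X : Type} (U : Set X) (f : X → ℕ) :
    restrictTo U f ∈ ValuationOn U := fun x hx => Set.indicator_of_notMem hx f

lemma restrictTo_diff_singleton {X : Type} [DecidableEq X] (P : Set X) (p : X) (f : X → ℕ)
    (hf : ∀ x, x ∉ P → f x = 0) :
    restrictTo (P \ {p}) f = Function.update f p 0 := by
  funext x
  by_cases hxp : x = p
  · subst hxp; simp [restrictTo]
  · rw [Function.update_of_ne hxp]
    by_cases hx : x ∈ P
    · have hmem : x ∈ P \ {p} := ⟨hx, hxp⟩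
      exact Set.indicator_of_mem hmem f
    · rw [restrictTo, Set.indicator_of_notMem (fun h => hx h.1), hf x hx]

namespace PNet

lemma ss_pre_eq (N₂ : PNet X T₂) (hwf₂ : N₂.WF) {p : X} {t : T₂}
    (hss : N₂.SourceSink p t) {u : T₂} (hu : u ∈ N₂.trans) (hut : u ≠ t) :
    (N₂.removeSourceSink p t).Pre u = N₂.Pre u := by
  funext x
  show restrictTo (N₂.places \ {p}) (N₂.Pre u) x = N₂.Pre u x
  by_cases hx : x ∈ N₂.places \ {p}
  · exact Set.indicator_of_mem hx _
  · rw [restrictTo, Set.indicator_of_notMem hx]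
    by_cases hxp : x = p
    · subst hxp; exact (hss.2.2.2.1 u hu hut).symm
    · exact ((hwf₂.2.2.2 u hu x (fun h => hx ⟨h, hxp⟩)).1).symm

lemma ss_post_eq (N₂ : PNet X T₂) (hwf₂ : N₂.WF) {p : X} {t : T₂}
    (hss : N₂.SourceSink p t) {u : T₂} (hu : u ∈ N₂.trans) :
    (N₂.removeSourceSink p t).Post u = N₂.Post u := by
  funext x
  show restrictTo (N₂.places \ {p}) (N₂.Post u) x = N₂.Post u x
  by_cases hx : x ∈ N₂.places \ {p}
  · exact Set.indicator_of_mem hx _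
  · rw [restrictTo, Set.indicator_of_notMem hx]
    by_cases hxp : x = p
    · subst hxp; exact (hss.2.2.1 u hu).symm
    · exact ((hwf₂.2.2.2 u hu x (fun h => hx ⟨h, hxp⟩)).2).symm

lemma ss_pre_p (N₂ : PNet X T₂) {p : X} {t : T₂}
    (hss : N₂.SourceSink p t) {u : T₂} (hu : u ∈ N₂.trans) (hut : u ≠ t) :
    N₂.Pre u p = 0 := hss.2.2.2.1 u hu hut

lemma ss_post_p (N₂ : PNet X T₂) {p : X} {t : T₂}
    (hss : N₂.SourceSink p t) {u : T₂} (hu : u ∈ N₂.trans) :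
    N₂.Post u p = 0 := hss.2.2.1 u hu

lemma R_forward (N₂ : PNet X T₂) (hwf₂ : N₂.WF) {p : X} {t : T₂}
    (hss : N₂.SourceSink p t) :
    ∀ m ∈ N₂.R, Function.update m p 0 ∈ (N₂.removeSourceSink p t).R ∧ m p ≤ N₂.m0 p := by
  intro m hm
  induction hm with
  | refl =>
    refine ⟨?_, le_refl _⟩
    have h0 : (N₂.removeSourceSink p t).m0 = Function.update N₂.m0 p 0 :=
      restrictTo_diff_singleton _ _ _ hwf₂.2.2.1
    show Relation.ReflTransGen _ _ _
    rw [← h0]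
  | tail hab hbc ih =>
    rename_i b c
    obtain ⟨u, ⟨hu, hle⟩, hc⟩ := hbc
    subst hc
    by_cases hut : u = t
    · subst hut
      have heq : Function.update (N₂.fire u b) p 0 = Function.update b p 0 := by
        funext x
        by_cases hxp : x = p
        · subst hxp; simp
        · rw [Function.update_of_ne hxp, Function.update_of_ne hxp]
          show b x - N₂.Pre u x + N₂.Post u x = b x
          rw [hss.2.2.2.2.2.1 x hxp, hss.2.2.2.2.2.2 x]
          omega
      refine ⟨heq ▸ ih.1, ?_⟩
      show b p - N₂.Pre u p + N₂.Post u p ≤ N₂.m0 p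
      rw [hss.2.2.2.2.2.2 p]
      exact le_trans (Nat.le_of_lt_succ (Nat.lt_succ_of_le (Nat.sub_le _ _))) ih.2
    · have hpre := N₂.ss_pre_eq hwf₂ hss hu hut
      have hpost := N₂.ss_post_eq hwf₂ hss hu
      have hstep : (N₂.removeSourceSink p t).Step (Function.update b p 0)
          (Function.update (N₂.fire u b) p 0) := by
        refine ⟨u, ⟨?_, ?_⟩, ?_⟩
        · exact ⟨hu, hut⟩
        · intro x
          rw [hpre]
          by_cases hxp : x = p
          · subst hxp
            rw [N₂.ss_pre_p hss hu hut]
            exact Nat.zero_le _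
          · rw [Function.update_of_ne hxp]; exact hle x
        · funext x
          show Function.update (N₂.fire u b) p 0 x
            = Function.update b p 0 x - _ + _
          rw [hpre, hpost]
          by_cases hxp : x = p
          · subst hxp
            simp [N₂.ss_pre_p hss hu hut, N₂.ss_post_p hss hu]
          · rw [Function.update_of_ne hxp, Function.update_of_ne hxp]
            rfl
      refine ⟨ih.1.tail hstep, ?_⟩
      show b p - N₂.Pre u p + N₂.Post u p ≤ N₂.m0 p
      rw [N₂.ss_pre_p hss hu hut, N₂.ss_post_p hss hu]
      simpa using ih.2

lemma R_drain (N₂ : PNet X T₂) {p : X} {t : T₂} (hss : N₂.SourceSink p t) :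
    ∀ c ≤ N₂.m0 p, Function.update N₂.m0 p c ∈ N₂.R := by
  have key : ∀ n, Function.update N₂.m0 p (N₂.m0 p - n) ∈ N₂.R := by
    intro n
    induction n with
    | zero =>
      have h : Function.update N₂.m0 p (N₂.m0 p - 0) = N₂.m0 := by simp
      rw [h]
      exact Relation.ReflTransGen.refl
    | succ n ih =>
      by_cases h0 : N₂.m0 p - n = 0
      · have : N₂.m0 p - (n + 1) = 0 := by omega
        rw [this, ← h0]; exact ih
      · have h1 : 1 ≤ N₂.m0 p - n := Nat.one_le_iff_ne_zero.mpr h0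
        refine ih.tail ⟨t, ⟨hss.2.1, ?_⟩, ?_⟩
        · intro x
          by_cases hxp : x = p
          · subst hxp; rw [hss.2.2.2.2.1]; simpa using h1
          · rw [hss.2.2.2.2.2.1 x hxp]; exact Nat.zero_le _
        · funext x
          show Function.update N₂.m0 p (N₂.m0 p - (n+1)) x
            = Function.update N₂.m0 p (N₂.m0 p - n) x - N₂.Pre t x + N₂.Post t x
          rw [hss.2.2.2.2.2.2 x]
          by_cases hxp : x = p
          · subst hxp
            rw [Function.update_self, Function.update_self, hss.2.2.2.2.1]
            omega
          · rw [Function.update_of_ne hxp, Function.update_of_ne hxp,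
              hss.2.2.2.2.2.1 x hxp]
            omega
      -- end
  intro c hc
  have := key (N₂.m0 p - c)
  rwa [Nat.sub_sub_self hc] at this

lemma R_backward (N₂ : PNet X T₂) (hwf₂ : N₂.WF) {p : X} {t : T₂}
    (hss : N₂.SourceSink p t) (m : X → ℕ)
    (hm3 : Function.update m p 0 ∈ (N₂.removeSourceSink p t).R)
    (hmk : m p ≤ N₂.m0 p) : m ∈ N₂.R := by
  set c := m p with hc
  have hlift : ∀ a b, (N₂.removeSourceSink p t).Step a b →
      N₂.Step (Function.update a p c) (Function.update b p c) := by
    intro a b hab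
    obtain ⟨u, ⟨hu3, hle⟩, hb⟩ := hab
    have hu : u ∈ N₂.trans := hu3.1
    have hut : u ≠ t := hu3.2
    have hpre := N₂.ss_pre_eq hwf₂ hss hu hut
    have hpost := N₂.ss_post_eq hwf₂ hss hu
    subst hb
    refine ⟨u, ⟨hu, ?_⟩, ?_⟩
    · intro x
      by_cases hxp : x = p
      · subst hxp; rw [N₂.ss_pre_p hss hu hut]; exact Nat.zero_le _
      · rw [Function.update_of_ne hxp]
        have := hle x
        rwa [hpre] at this
    · funext x
      show Function.update ((N₂.removeSourceSink p t).fire u a) p c x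
        = Function.update a p c x - N₂.Pre u x + N₂.Post u x
      by_cases hxp : x = p
      · subst hxp
        rw [Function.update_self, Function.update_self,
          N₂.ss_pre_p hss hu hut, N₂.ss_post_p hss hu]
        omega
      · rw [Function.update_of_ne hxp, Function.update_of_ne hxp]
        show (N₂.removeSourceSink p t).fire u a x = _
        unfold PNet.fire
        rw [hpre, hpost]
  have h0 : (N₂.removeSourceSink p t).m0 = Function.update N₂.m0 p 0 :=
    restrictTo_diff_singleton _ _ _ hwf₂.2.2.1
  have h1 : Function.update N₂.m0 p c ∈ N₂.R := N₂.R_drain hss c hmk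
  have h2 : Relation.ReflTransGen N₂.Step
      (Function.update ((N₂.removeSourceSink p t).m0) p c)
      (Function.update (Function.update m p 0) p c) :=
    Relation.ReflTransGen.lift (fun m => Function.update m p c) hlift _ _ hm3
  rw [h0, Function.update_idem, Function.update_idem] at h2
  have h3 : Function.update m p c = m := Function.update_eq_self p m
  rw [h3] at h2
  exact h1.trans h2

lemma R_iff (N₂ : PNet X T₂) (hwf₂ : N₂.WF) {p : X} {t : T₂}
    (hss : N₂.SourceSink p t) (m : X → ℕ) :
    m ∈ N₂.R ↔ Function.update m p 0 ∈ (N₂.removeSourceSink p t).R ∧ m p ≤ N₂.m0 p :=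
  ⟨fun h => N₂.R_forward hwf₂ hss m h, fun h => N₂.R_backward hwf₂ hss m h.1 h.2⟩

end PNet

end AuxSS

/-- Net-abstractions are preserved by removal of a source-sink pair
`(p, t)` of `N₂` with `k = m₀₂(p)`, the constraint system being extended with the
variable `p` and the inequality `p ≤ k`. -/
theorem netAbstraction_removeSourceSink {X T₁ T₂ : Type} [Countable X] [DecidableEq X]
    (N₁ : PNet X T₁) (N₂ : PNet X T₂) (hwf₁ : N₁.WF) (hwf₂ : N₂.WF)
    (W : Set X) (hW : W.Finite) (S : Set (X → ℕ)) (hS : S ⊆ ValuationOn W)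
    (habs : NetAbstraction N₁ W S N₂)
    (p : X) (t : T₂) (hss : N₂.SourceSink p t) :
    NetAbstraction N₁ (W ∪ {p})
      {e | e ∈ ValuationOn (W ∪ {p}) ∧ restrictTo W e ∈ S ∧ e p ≤ N₂.m0 p}
      (N₂.removeSourceSink p t) := by
  have hp2 : p ∈ N₂.places := hss.1
  have hV : (W ∪ {p}) ∪ N₁.places ∪ (N₂.removeSourceSink p t).places
      = W ∪ N₁.places ∪ N₂.places := by
    show (W ∪ {p}) ∪ N₁.places ∪ (N₂.places \ {p}) = _
    ext x
    by_cases hx : x = p <;> simp [hx, hp2] <;> tauto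
  unfold NetAbstraction at habs ⊢
  rw [habs, hV]
  have hpmem : p ∈ W ∪ {p} := Set.mem_union_right W (Set.mem_singleton p)
  refine congrArg (fun E => projTo E N₁.places) ?_
  ext f
  simp only [liftTo, Set.mem_inter_iff, Set.mem_setOf_eq]
  constructor
  · rintro ⟨⟨hvf, hR2⟩, _, hSf⟩
    rw [N₂.R_iff hwf₂ hss] at hR2
    have key1 : restrictTo ((N₂.removeSourceSink p t).places) f
        = Function.update (restrictTo N₂.places f) p 0 := by
      show restrictTo (N₂.places \ {p}) f = _
      funext x
      by_cases hxp : x = p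
      · subst hxp; simp [restrictTo]
      · rw [Function.update_of_ne hxp]
        show Set.indicator _ f x = Set.indicator _ f x
        by_cases hx : x ∈ N₂.places
        · have hmem : x ∈ N₂.places \ {p} := ⟨hx, hxp⟩
          rw [Set.indicator_of_mem hmem, Set.indicator_of_mem hx]
        · rw [Set.indicator_of_notMem (fun h => hx h.1), Set.indicator_of_notMem hx]
    have key2 : restrictTo N₂.places f p = f p := Set.indicator_of_mem hp2 f
    refine ⟨⟨hvf, ?_⟩, hvf, ?_, ?_, ?_⟩
    · rw [key1]; exact hR2.1
    · exact restrictTo_mem_valuationOn _ _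
    · show restrictTo W (restrictTo (W ∪ {p}) f) ∈ S
      rw [restrictTo, restrictTo, Set.indicator_indicator,
        Set.inter_eq_self_of_subset_left Set.subset_union_left]
      exact hSf
    · show restrictTo (W ∪ {p}) f p ≤ N₂.m0 p
      rw [restrictTo, Set.indicator_of_mem hpmem]
      rw [key2] at hR2
      exact hR2.2
  · rintro ⟨⟨hvf, hR3⟩, _, _, hSf, hfp⟩
    have key1 : restrictTo ((N₂.removeSourceSink p t).places) f
        = Function.update (restrictTo N₂.places f) p 0 := by
      show restrictTo (N₂.places \ {p}) f = _
      funext x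
      by_cases hxp : x = p
      · subst hxp; simp [restrictTo]
      · rw [Function.update_of_ne hxp]
        show Set.indicator _ f x = Set.indicator _ f x
        by_cases hx : x ∈ N₂.places
        · have hmem : x ∈ N₂.places \ {p} := ⟨hx, hxp⟩
          rw [Set.indicator_of_mem hmem, Set.indicator_of_mem hx]
        · rw [Set.indicator_of_notMem (fun h => hx h.1), Set.indicator_of_notMem hx]
    have key2 : restrictTo N₂.places f p = f p := Set.indicator_of_mem hp2 f
    have hfpW : restrictTo (W ∪ {p}) f p = f p :=
      Set.indicator_of_mem hpmem f
    refine ⟨⟨hvf, ?_⟩, hvf, ?_⟩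
    · rw [N₂.R_iff hwf₂ hss]
      refine ⟨?_, ?_⟩
      · rw [← key1]; exact hR3
      · rw [key2, ← hfpW]; exact hfp
    · have := hSf
      rw [restrictTo, restrictTo, Set.indicator_indicator,
        Set.inter_eq_self_of_subset_left Set.subset_union_left] at this
      exact this
end
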